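/- Every triangulation T on the sphere with at least 4 vertices has at most |V(T)| - 3 subgraphs isomorphic to K_4. -/

import Mathlib

open SimpleGraph

/-- `H` is a minor of `G`: disjoint nonempty connected branch sets with edges
between the branch sets of adjacent vertices of `H`. -/
def GraphMinor {W V : Type} (H : SimpleGraph W) (G : SimpleGraph V) : Prop :=
  ∃ f : W → Set V,
    (∀ w, (f w).Nonempty) ∧
    (∀ w, (G.induce (f w)).Connected) ∧
    (∀ w w', w ≠ w' → Disjoint (f w) (f w')) ∧
    (∀ w w', H.Adj w w' → ∃ x ∈ f w, ∃ y ∈ f w', G.Adj x y)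

/-- A graph is planar iff it has no `K₅` minor and no `K_{3,3}` minor (Wagner's theorem). -/
def IsPlanar {V : Type} (G : SimpleGraph V) : Prop :=
  ¬ GraphMinor (completeGraph (Fin 5)) G ∧
  ¬ GraphMinor (completeBipartiteGraph (Fin 3) (Fin 3)) G

/-- A triangulation on the sphere: a maximal planar graph with at least 4 vertices. -/
def IsSphereTriangulation {V : Type} (T : SimpleGraph V) : Prop :=
  4 ≤ Nat.card V ∧ IsPlanar T ∧
    ∀ u v : V, u ≠ v → ¬ T.Adj u v →
      ¬ IsPlanar (T ⊔ SimpleGraph.fromRel (fun a b => a = u ∧ b = v))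

/-- A `K₅` branch-set packing with all branch sets inside `A`. -/
def HasK5Within {V : Type} (G : SimpleGraph V) (A : Set V) : Prop :=
  ∃ f : Fin 5 → Set V,
    (∀ w, (f w).Nonempty) ∧
    (∀ w, f w ⊆ A) ∧
    (∀ w, (G.induce (f w)).Connected) ∧
    (∀ w w', w ≠ w' → Disjoint (f w) (f w')) ∧
    (∀ w w', w ≠ w' → ∃ x ∈ f w, ∃ y ∈ f w', G.Adj x y)

lemma HasK5Within.mono {V : Type} {G : SimpleGraph V} {A B : Set V}
    (h : HasK5Within G A) (hAB : A ⊆ B) : HasK5Within G B := by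
  obtain ⟨f, h1, h2, h3, h4, h5⟩ := h
  exact ⟨f, h1, fun w => (h2 w).trans hAB, h3, h4, h5⟩

lemma HasK5Within.graphMinor {V : Type} {G : SimpleGraph V}
    (h : HasK5Within G Set.univ) : GraphMinor (completeGraph (Fin 5)) G := by
  obtain ⟨f, h1, _, h3, h4, h5⟩ := h
  exact ⟨f, h1, h3, h4, fun w w' hww' => h5 w w' hww'⟩

lemma reachable_induce_of_walk {V : Type} {G : SimpleGraph V} {C : Set V} :
    ∀ {x y : V} (p : G.Walk x y) (hp : ∀ z ∈ p.support, z ∈ C),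
    (G.induce C).Reachable ⟨x, hp x p.start_mem_support⟩ ⟨y, hp y p.end_mem_support⟩ := by
  intro x y p
  induction p with
  | nil => intro hp; exact Reachable.refl _
  | @cons a b c h q ih =>
    intro hp
    have hb : b ∈ C := hp b (by simp)
    have ha : a ∈ C := hp a (by simp)
    have hq : ∀ z ∈ q.support, z ∈ C := fun z hz => hp z (by simp [hz])
    have hadj : (G.induce C).Adj ⟨a, ha⟩ ⟨b, hb⟩ := by
      simp only [comap_adj, Function.Embedding.coe_subtype]
      exact h
    exact hadj.reachable.trans (ih hq)

lemma connected_induce_singleton {V : Type} (G : SimpleGraph V) (x : V) :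
    (G.induce ({x} : Set V)).Connected := by
  rw [connected_iff]
  refine ⟨fun a b => ?_, ⟨⟨x, rfl⟩⟩⟩
  have : a = b := Subtype.ext (a.2.trans b.2.symm)
  exact this ▸ Reachable.refl _


lemma count_K4_le {V : Type} [Fintype V] (G : SimpleGraph V) :
    ∀ (n : ℕ) (A : Finset V), A.card ≤ n → ¬ HasK5Within G ↑A →
      {s : Finset V | ↑s ⊆ (A : Set V) ∧ G.IsNClique 4 s}.ncard ≤ A.card - 3 := by
  classical
  intro n
  induction n with
  | zero =>
    intro A hA _
    have hAe : A = ∅ := Finset.card_eq_zero.mp (Nat.le_zero.mp hA)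
    subst hAe
    have : {s : Finset V | ↑s ⊆ ((∅ : Finset V) : Set V) ∧ G.IsNClique 4 s} = ∅ := by
      ext s
      simp only [Set.mem_setOf_eq, Finset.coe_empty, Set.subset_empty_iff, Finset.coe_eq_empty,
        Set.mem_empty_iff_false, iff_false, not_and]
      rintro rfl h
      simpa using h.card_eq
    rw [this]
    simp
  | succ n ih =>
    intro A hA hK5
    by_cases hne : {s : Finset V | ↑s ⊆ (A : Set V) ∧ G.IsNClique 4 s}.Nonempty
    swap
    · rw [Set.not_nonempty_iff_eq_empty.mp hne]; simp
    obtain ⟨Q, hQA, hQcl⟩ := hne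
    have hQsub : Q ⊆ A := Finset.coe_subset.mp hQA
    have hQcard : Q.card = 4 := hQcl.card_eq
    have hA4 : 4 ≤ A.card := hQcard ▸ Finset.card_le_card hQsub
    by_cases hA5 : A.card = 4
    · have hsub : {s : Finset V | ↑s ⊆ (A : Set V) ∧ G.IsNClique 4 s} ⊆ {A} := by
        rintro s ⟨hs1, hs2⟩
        have hs4 : s.card = 4 := hs2.card_eq
        have : s = A :=
          Finset.eq_of_subset_of_card_le (Finset.coe_subset.mp hs1) (by omega)
        simp [this]
      calc {s : Finset V | ↑s ⊆ (A : Set V) ∧ G.IsNClique 4 s}.ncard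
          ≤ ({A} : Set (Finset V)).ncard := Set.ncard_le_ncard hsub (Set.finite_singleton _)
        _ = 1 := Set.ncard_singleton _
        _ ≤ A.card - 3 := by omega
    · have hA5' : 5 ≤ A.card := by omega
      obtain ⟨v, hvA, hvQ⟩ : ∃ v ∈ A, v ∉ Q := by
        by_contra hcon
        push_neg at hcon
        have := Finset.card_le_card hcon
        omega
      set C : Set V := {x | ∃ p : G.Walk v x, ∀ z ∈ p.support, z ∈ A ∧ z ∉ Q} with hCdef
      have hvC : v ∈ C := ⟨Walk.nil, by simp [hvA, hvQ]⟩
      have hCsub : ∀ x ∈ C, x ∈ A ∧ x ∉ Q := by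
        rintro x ⟨p, hp⟩; exact hp x p.end_mem_support
      have hCclosed : ∀ x ∈ C, ∀ y, G.Adj x y → y ∈ A → y ∉ Q → y ∈ C := by
        rintro x ⟨p, hp⟩ y hxy hyA hyQ
        refine ⟨p.concat hxy, fun z hz => ?_⟩
        rw [Walk.support_concat, List.mem_append] at hz
        rcases hz with hz | hz
        · exact hp z hz
        · simp at hz; subst hz; exact ⟨hyA, hyQ⟩
      have hCmemwalk : ∀ x ∈ C, ∃ p : G.Walk v x, ∀ z ∈ p.support, z ∈ C := by
        rintro x ⟨p, hp⟩
        refine ⟨p, fun z hz => ?_⟩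
        exact ⟨p.takeUntil z hz, fun w hw => hp w (p.support_takeUntil_subset hz hw)⟩
      have hCconn : (G.induce C).Connected := by
        rw [connected_iff]
        refine ⟨?_, ⟨⟨v, hvC⟩⟩⟩
        rintro ⟨x, hx⟩ ⟨y, hy⟩
        obtain ⟨p, hp⟩ := hCmemwalk x hx
        obtain ⟨p', hp'⟩ := hCmemwalk y hy
        exact (reachable_induce_of_walk p hp).symm.trans (reachable_induce_of_walk p' hp')
      by_cases hall : ∀ q ∈ Q, ∃ c ∈ C, G.Adj q c
      · exfalso
        apply hK5
        have e := Finset.equivFinOfCardEq hQcard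
        refine ⟨fun i => if h : (i : ℕ) < 4 then {(e.symm ⟨i, h⟩ : V)} else C,
          ?_, ?_, ?_, ?_, ?_⟩
        · intro w
          by_cases h : (w : ℕ) < 4 <;> simp [h]
          exact ⟨v, hvC⟩
        · intro w
          by_cases h : (w : ℕ) < 4 <;> simp [h]
          · exact hQA (Finset.coe_mem _)
          · intro x hx; exact (hCsub x hx).1
        · intro w
          dsimp only
          by_cases h : (w : ℕ) < 4
          · rw [dif_pos h]; exact connected_induce_singleton G _
          · rw [dif_neg h]; exact hCconn
        · intro w w' hww'
          by_cases h : (w : ℕ) < 4 <;> by_cases h' : (w' : ℕ) < 4 <;>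
            simp only [h, h', dite_true, dite_false]
          · rw [Set.disjoint_singleton]
            intro heq
            apply hww'
            have : e.symm ⟨(w : ℕ), h⟩ = e.symm ⟨(w' : ℕ), h'⟩ := Subtype.ext heq
            have := e.symm.injective this
            simp only [Fin.mk.injEq] at this
            exact Fin.ext this
          · rw [Set.disjoint_singleton_left]
            intro hc
            exact (hCsub _ hc).2 (Finset.coe_mem _)
          · rw [Set.disjoint_singleton_right]
            intro hc
            exact (hCsub _ hc).2 (Finset.coe_mem _)
          · exfalso; apply hww'; apply Fin.ext; omega
        · intro w w' hww'
          by_cases h : (w : ℕ) < 4 <;> by_cases h' : (w' : ℕ) < 4 <;>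
            simp only [h, h', dite_true, dite_false]
          · refine ⟨_, rfl, _, rfl, ?_⟩
            apply hQcl.isClique (Finset.coe_mem _) (Finset.coe_mem _)
            intro heq
            apply hww'
            have : e.symm ⟨(w : ℕ), h⟩ = e.symm ⟨(w' : ℕ), h'⟩ := Subtype.ext heq
            have := e.symm.injective this
            simp only [Fin.mk.injEq] at this
            exact Fin.ext this
          · obtain ⟨c, hc, hadj⟩ := hall _ (Finset.coe_mem (e.symm ⟨(w : ℕ), h⟩))
            exact ⟨_, rfl, c, hc, hadj⟩
          · obtain ⟨c, hc, hadj⟩ := hall _ (Finset.coe_mem (e.symm ⟨(w' : ℕ), h'⟩))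
            exact ⟨c, hc, _, rfl, hadj.symm⟩
          · exfalso; apply hww'; apply Fin.ext; omega
      · push_neg at hall
        obtain ⟨q, hqQ, hqC⟩ := hall
        set CF : Finset V := A.filter (· ∈ C) with hCFdef
        have hCF_iff : ∀ x, x ∈ CF ↔ x ∈ C := by
          intro x
          simp only [hCFdef, Finset.mem_filter, decide_eq_true_eq]
          exact ⟨fun h => h.2, fun h => ⟨(hCsub x h).1, h⟩⟩
        set A1 : Finset V := CF ∪ Q.erase q with hA1def
        set A2 : Finset V := A \ CF with hA2def
        have hCFA : CF ⊆ A := Finset.filter_subset _ _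
        have hA1sub : A1 ⊆ A :=
          Finset.union_subset hCFA ((Finset.erase_subset _ _).trans hQsub)
        have hqA1 : q ∉ A1 := by
          simp only [hA1def, Finset.mem_union, not_or]
          constructor
          · intro h; exact (hCsub q ((hCF_iff q).mp h)).2 hqQ
          · exact Finset.notMem_erase _ _
        have hA1card : A1.card < A.card :=
          Finset.card_lt_card ⟨hA1sub, fun h => hqA1 (h (hQsub hqQ))⟩
        have hvCF : v ∈ CF := (hCF_iff v).mpr hvC
        have hvA2 : v ∉ A2 := by simp [hA2def, hvCF]
        have hA2card : A2.card < A.card :=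
          Finset.card_lt_card ⟨Finset.sdiff_subset, fun h => hvA2 (h hvA)⟩
        have hCFQdisj : Disjoint CF (Q.erase q) := by
          rw [Finset.disjoint_left]
          intro x hx hx'
          exact (hCsub x ((hCF_iff x).mp hx)).2 (Finset.mem_of_mem_erase hx')
        have hA1cardeq : A1.card = CF.card + 3 := by
          rw [hA1def, Finset.card_union_of_disjoint hCFQdisj,
            Finset.card_erase_of_mem hqQ, hQcard]
        have hA2cardeq : A2.card = A.card - CF.card := Finset.card_sdiff_of_subset hCFA
        have hCFcard : CF.card + 4 ≤ A.card := by
          have hdisj : Disjoint CF Q := by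
            rw [Finset.disjoint_left]
            intro x hx hx'
            exact (hCsub x ((hCF_iff x).mp hx)).2 hx'
          have : CF ∪ Q ⊆ A := Finset.union_subset hCFA hQsub
          have := Finset.card_le_card this
          rw [Finset.card_union_of_disjoint hdisj, hQcard] at this
          exact this
        -- every counted clique is inside A1 or inside A2
        have hsplit : {s : Finset V | ↑s ⊆ (A : Set V) ∧ G.IsNClique 4 s} ⊆
            {s : Finset V | ↑s ⊆ (A1 : Set V) ∧ G.IsNClique 4 s} ∪
            {s : Finset V | ↑s ⊆ (A2 : Set V) ∧ G.IsNClique 4 s} := by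
          rintro s ⟨hsA, hscl⟩
          by_cases hmeet : ∃ x ∈ s, x ∈ C
          · left
            refine ⟨?_, hscl⟩
            intro y hy
            obtain ⟨x, hxs, hxC⟩ := hmeet
            rw [Finset.mem_coe] at hy
            by_cases hyx : y = x
            · subst hyx
              exact Finset.mem_coe.mpr (Finset.mem_union_left _ ((hCF_iff y).mpr hxC))
            · have hadj : G.Adj x y := hscl.isClique hxs hy (fun h => hyx h.symm)
              have hyA : y ∈ A := hsA hy
              by_cases hyQ : y ∈ Q
              · have hyq : y ≠ q := by
                  intro h; subst h
                  exact hqC x hxC hadj.symm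
                exact Finset.mem_coe.mpr
                  (Finset.mem_union_right _ (Finset.mem_erase.mpr ⟨hyq, hyQ⟩))
              · have : y ∈ C := hCclosed x hxC y hadj hyA hyQ
                exact Finset.mem_coe.mpr (Finset.mem_union_left _ ((hCF_iff y).mpr this))
          · right
            push_neg at hmeet
            refine ⟨?_, hscl⟩
            intro y hy
            rw [Finset.mem_coe] at hy
            refine Finset.mem_coe.mpr (Finset.mem_sdiff.mpr ⟨hsA hy, ?_⟩)
            intro h
            exact hmeet y hy ((hCF_iff y).mp h)
        have hc1 := ih A1 (by omega) (fun h => hK5 (h.mono (by exact_mod_cast hA1sub)))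
        have hc2 := ih A2 (by omega) (fun h => hK5 (h.mono (by
          exact_mod_cast (Finset.sdiff_subset : A2 ⊆ A))))
        calc {s : Finset V | ↑s ⊆ (A : Set V) ∧ G.IsNClique 4 s}.ncard
            ≤ ({s : Finset V | ↑s ⊆ (A1 : Set V) ∧ G.IsNClique 4 s} ∪
               {s : Finset V | ↑s ⊆ (A2 : Set V) ∧ G.IsNClique 4 s}).ncard :=
              Set.ncard_le_ncard hsplit (Set.toFinite _)
          _ ≤ {s : Finset V | ↑s ⊆ (A1 : Set V) ∧ G.IsNClique 4 s}.ncard +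
              {s : Finset V | ↑s ⊆ (A2 : Set V) ∧ G.IsNClique 4 s}.ncard :=
              Set.ncard_union_le _ _
          _ ≤ (A1.card - 3) + (A2.card - 3) := Nat.add_le_add hc1 hc2
          _ ≤ A.card - 3 := by omega

/-- Every triangulation on the sphere (with at least 4 vertices) has at most
`|V(T)| - 3` subgraphs isomorphic to `K₄`, i.e. 4-cliques. -/
theorem sphere_triangulation_card_K4_le {V : Type} [Fintype V] (T : SimpleGraph V)
    (hT : IsSphereTriangulation T) :
    {s : Finset V | T.IsNClique 4 s}.ncard ≤ Nat.card V - 3 := by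
  obtain ⟨hcard, hplanar, hmax⟩ := hT
  have hK5 : ¬ HasK5Within T (↑(Finset.univ : Finset V)) := by
    rw [Finset.coe_univ]
    intro h
    exact hplanar.1 h.graphMinor
  have h := count_K4_le T (Finset.univ : Finset V).card Finset.univ le_rfl hK5
  have hset : {s : Finset V | T.IsNClique 4 s} =
      {s : Finset V | ↑s ⊆ ((Finset.univ : Finset V) : Set V) ∧ T.IsNClique 4 s} := by
    ext s; simp
  rw [hset, Nat.card_eq_fintype_card, ← Finset.card_univ]
  exact h
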